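/- An action a* is elicitable (some convex menu G satisfies the incentive constraints G(p_{a*}) − c_{a*} ≥ G(p_a) − c_a for all a and participation G(p_{a*}) − c_{a*} ≥ 0) if and only if c(p_{a*}) = c_{a*}, i.e. the point (p_{a*}, c_{a*}) lies on the lower boundary of the convex hull of {(p_a, c_a) : a ∈ A}. -/

import Mathlib

open Finset

/-- An action `a*` is elicitable (some convex menu satisfies the incentive and
participation constraints) if and only if `c(p_{a*}) = c_{a*}`, i.e. the point
`(p_{a*}, c_{a*})` lies on the lower boundary of the convex hull of the points
`(p_a, c_a)`. -/
theorem elicitable_iff_on_cost_curve {A Ω : Type*} [Fintype A] [Fintype Ω]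
    (pdist : A → Ω → ℝ) (hp : ∀ a, pdist a ∈ stdSimplex ℝ Ω)
    (cost : A → ℝ) (hcost : ∀ a, 0 ≤ cost a)
    (c : (Ω → ℝ) → ℝ)
    -- `c` is the convexified cost curve: the minimum mixture cost implementing `p`
    (hc : ∀ p ∈ convexHull ℝ (Set.range pdist),
      (∃ lam : A → ℝ, (∀ a, 0 ≤ lam a) ∧ (∑ a, lam a) = 1 ∧
        (∀ ω, ∑ a, lam a * pdist a ω = p ω) ∧ (∑ a, lam a * cost a) = c p) ∧
      (∀ lam : A → ℝ, (∀ a, 0 ≤ lam a) → (∑ a, lam a) = 1 →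
        (∀ ω, ∑ a, lam a * pdist a ω = p ω) → c p ≤ ∑ a, lam a * cost a))
    (astar : A) :
    (∃ G : (Ω → ℝ) → ℝ, ConvexOn ℝ (convexHull ℝ (Set.range pdist)) G ∧
      (∀ a, G (pdist astar) - cost astar ≥ G (pdist a) - cost a) ∧
      0 ≤ G (pdist astar) - cost astar)
    ↔ c (pdist astar) = cost astar := by
  classical
  have hhull : ∀ a, pdist a ∈ convexHull ℝ (Set.range pdist) :=
    fun a => subset_convexHull ℝ _ ⟨a, rfl⟩
  have hcle : ∀ a, c (pdist a) ≤ cost a := by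
    intro a
    have := (hc (pdist a) (hhull a)).2 (fun b => if b = a then 1 else 0)
      (fun b => by split <;> norm_num) (by simp) (fun ω => by simp [ite_mul])
    simpa [ite_mul] using this
  constructor
  · rintro ⟨G, hG, hIC, _⟩
    refine le_antisymm (hcle astar) ?_
    obtain ⟨⟨lam, hlam0, hlam1, hlamp, hlamc⟩, -⟩ := hc (pdist astar) (hhull astar)
    have hsum : ∑ a, lam a • pdist a = pdist astar := by
      funext ω
      simpa using hlamp ω
    have hJ : G (pdist astar) ≤ ∑ a, lam a * G (pdist a) := by
      have := hG.map_sum_le (t := Finset.univ) (w := lam) (p := pdist)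
        (fun a _ => hlam0 a) hlam1 (fun a _ => hhull a)
      simpa [hsum, smul_eq_mul] using this
    have hbound : ∑ a, lam a * G (pdist a) ≤
        ∑ a, lam a * (cost a + (G (pdist astar) - cost astar)) := by
      refine Finset.sum_le_sum fun a _ => ?_
      have := hIC a
      nlinarith [hlam0 a]
    have heq2 : ∑ a, lam a * (cost a + (G (pdist astar) - cost astar)) =
        c (pdist astar) + (G (pdist astar) - cost astar) := by
      simp only [mul_add, Finset.sum_add_distrib, ← Finset.sum_mul, hlam1, hlamc, one_mul]
    linarith [hJ.trans (hbound.trans_eq heq2)]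
  · intro heq
    refine ⟨c, ⟨convex_convexHull ℝ _, ?_⟩, ?_, by linarith⟩
    · intro p hpm q hq s t hs ht hst
      obtain ⟨⟨lp, hlp0, hlp1, hlpp, hlpc⟩, -⟩ := hc p hpm
      obtain ⟨⟨lq, hlq0, hlq1, hlqp, hlqc⟩, -⟩ := hc q hq
      have hmem : s • p + t • q ∈ convexHull ℝ (Set.range pdist) :=
        (convex_convexHull ℝ _) hpm hq hs ht hst
      have hkey := (hc _ hmem).2 (fun a => s * lp a + t * lq a)
        (fun a => add_nonneg (mul_nonneg hs (hlp0 a)) (mul_nonneg ht (hlq0 a)))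
        (by
          simp only [Finset.sum_add_distrib, ← Finset.mul_sum, hlp1, hlq1, mul_one, hst])
        (by
          intro ω
          have h3 : ∑ a, (s * lp a + t * lq a) * pdist a ω
              = s * ∑ a, lp a * pdist a ω + t * ∑ a, lq a * pdist a ω := by
            rw [Finset.mul_sum, Finset.mul_sum, ← Finset.sum_add_distrib]
            congr 1; funext a; ring
          rw [h3, hlpp ω, hlqp ω]
          simp)
      calc c (s • p + t • q) ≤ ∑ a, (s * lp a + t * lq a) * cost a := hkey
        _ = s * ∑ a, lp a * cost a + t * ∑ a, lq a * cost a := by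
            rw [Finset.mul_sum, Finset.mul_sum, ← Finset.sum_add_distrib]
            congr 1; funext a; ring
        _ = s • c p + t • c q := by rw [hlpc, hlqc]; simp
    · intro a
      have h1 := hcle a
      rw [heq]
      linarith
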